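/- Let A be uniformly distributed on the unit disc, B uniform on the disc and independent of A, and let Θ₁ ∈ [0, π) be the angle that the line through A and B makes with the x-axis. Then Θ₁ is uniformly distributed on [0, π). -/

import Mathlib

open MeasureTheory Real

instance fact_pi_pos : Fact (0 < π) := ⟨Real.pi_pos⟩

/-- The closed unit disc in `ℝ × ℝ`. -/
def unitDisc : Set (ℝ × ℝ) := {x : ℝ × ℝ | x.1 ^ 2 + x.2 ^ 2 ≤ 1}

namespace AngleUniformAux

/-- canonical representative in `[0, π)` of an element of `AddCircle π`. -/
noncomputable def L : AddCircle π → ℝ := fun x => (AddCircle.equivIco π 0 x : ℝ)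

noncomputable def g : ℂ → AddCircle π := fun z => ((Complex.arg z : ℝ) : AddCircle π)

def eC : ℝ × ℝ → ℂ := fun p => p.1 + p.2 * Complex.I

lemma mem_L (x : AddCircle π) : L x ∈ Set.Ico 0 π := by
  have h := (AddCircle.equivIco π 0 x).2
  exact ⟨h.1, lt_of_lt_of_eq h.2 (zero_add π)⟩

lemma coe_L (x : AddCircle π) : ((L x : ℝ) : AddCircle π) = x :=
  (AddCircle.equivIco π 0).symm_apply_apply x

lemma L_mk (x : ℝ) (hx : x ∈ Set.Ico 0 π) : L (x : AddCircle π) = x := by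
  show ((QuotientAddGroup.equivIcoMod fact_pi_pos.out 0 (x : AddCircle π)) : ℝ) = x
  rw [QuotientAddGroup.equivIcoMod_coe]
  exact (toIcoMod_eq_self fact_pi_pos.out).mpr (by simpa using hx)

lemma measurable_L : Measurable L :=
  measurable_subtype_coe.comp (AddCircle.measurableEquivIco π 0).measurable

lemma measurable_g : Measurable g :=
  AddCircle.measurable_mk'.comp Complex.measurable_arg

lemma eC_eq_equiv : eC = ⇑Complex.measurableEquivRealProd.symm := by
  funext p
  rw [Complex.measurableEquivRealProd_symm_apply]
  apply Complex.ext <;> simp [eC]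

lemma measurable_eC : Measurable eC := by
  rw [eC_eq_equiv]; exact Complex.measurableEquivRealProd.symm.measurable

lemma volume_preserving_eC : MeasurePreserving eC := by
  rw [eC_eq_equiv]
  exact Complex.volume_preserving_equiv_real_prod.symm Complex.measurableEquivRealProd

lemma eC_injective : Function.Injective eC := by
  rw [eC_eq_equiv]; exact Complex.measurableEquivRealProd.symm.injective

@[simp] lemma eC_re (p : ℝ × ℝ) : (eC p).re = p.1 := by simp [eC]
@[simp] lemma eC_im (p : ℝ × ℝ) : (eC p).im = p.2 := by simp [eC]

lemma angle_unique {v1 v2 θ θ' : ℝ} (hv : v1 ≠ 0 ∨ v2 ≠ 0)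
    (hθ : θ ∈ Set.Ico 0 π) (hθ' : θ' ∈ Set.Ico 0 π)
    (h : Real.sin θ * v1 = Real.cos θ * v2) (h' : Real.sin θ' * v1 = Real.cos θ' * v2) :
    θ = θ' := by
  have e1 : Real.sin (θ - θ') * v1 = 0 := by
    rw [Real.sin_sub]
    linear_combination Real.cos θ' * h - Real.cos θ * h'
  have e2 : Real.sin (θ - θ') * v2 = 0 := by
    rw [Real.sin_sub]
    linear_combination Real.sin θ' * h - Real.sin θ * h'
  have hs : Real.sin (θ - θ') = 0 := by
    rcases hv with hv | hv
    · rcases mul_eq_zero.mp e1 with h0 | h0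
      · exact h0
      · exact absurd h0 hv
    · rcases mul_eq_zero.mp e2 with h0 | h0
      · exact h0
      · exact absurd h0 hv
  have h1 : -π < θ - θ' := by
    have := hθ.1; have := hθ'.2; linarith
  have h2 : θ - θ' < π := by
    have := hθ.2; have := hθ'.1; linarith
  have := (Real.sin_eq_zero_iff_of_lt_of_lt h1 h2).mp hs
  linarith

lemma cross_eq (z : ℂ) :
    Real.sin (L (g z)) * z.re - Real.cos (L (g z)) * z.im = 0 := by
  have h1 : ((L (g z) : ℝ) : AddCircle π) = ((Complex.arg z : ℝ) : AddCircle π) := coe_L _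
  rw [QuotientAddGroup.eq_iff_sub_mem] at h1
  obtain ⟨n, hn⟩ := AddSubgroup.mem_zmultiples_iff.mp h1
  have hsin : Real.sin (L (g z) - Complex.arg z) = 0 := by
    rw [← hn, zsmul_eq_mul]
    exact Real.sin_int_mul_pi n
  calc Real.sin (L (g z)) * z.re - Real.cos (L (g z)) * z.im
      = Real.sin (L (g z)) * (‖z‖ * Real.cos (Complex.arg z))
        - Real.cos (L (g z)) * (‖z‖ * Real.sin (Complex.arg z)) := by
        rw [Complex.norm_mul_cos_arg, Complex.norm_mul_sin_arg]
    _ = ‖z‖ * Real.sin (L (g z) - Complex.arg z) := by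
        rw [Real.sin_sub]; ring
    _ = 0 := by rw [hsin, mul_zero]

lemma angle_coe_pi {x y : ℝ} (h : (x : Real.Angle) = (y : Real.Angle)) :
    (x : AddCircle π) = (y : AddCircle π) := by
  obtain ⟨k, hk⟩ := Real.Angle.angle_eq_iff_two_pi_dvd_sub.mp h
  rw [QuotientAddGroup.eq_iff_sub_mem]
  exact AddSubgroup.mem_zmultiples_iff.mpr ⟨2 * k, by rw [zsmul_eq_mul]; push_cast; linarith⟩

lemma g_rot (α : ℝ) (z : ℂ) (hz : z ≠ 0) :
    g (((Real.Angle.toCircle (α : Real.Angle)) : ℂ) * z) = (α : AddCircle π) + g z := by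
  set c : Circle := Real.Angle.toCircle (α : Real.Angle)
  have hc : (c : ℂ) ≠ 0 := Circle.coe_ne_zero c
  have h2 : (Complex.arg ((c : ℂ) * z) : Real.Angle)
      = ((Complex.arg (c : ℂ) + Complex.arg z : ℝ) : Real.Angle) := by
    rw [Complex.arg_mul_coe_angle hc hz, Real.Angle.coe_add]
  have h3 : (Complex.arg (c : ℂ) : Real.Angle) = (α : Real.Angle) :=
    Real.Angle.arg_toCircle _
  have h4 : (Complex.arg ((c : ℂ) * z) : AddCircle π)
      = ((Complex.arg (c : ℂ) + Complex.arg z : ℝ) : AddCircle π) := angle_coe_pi h2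
  have h5 : (Complex.arg (c : ℂ) : AddCircle π) = (α : AddCircle π) := angle_coe_pi h3
  show (Complex.arg ((c : ℂ) * z) : AddCircle π) = _
  rw [h4, ← h5]
  show ((Complex.arg (c : ℂ) + Complex.arg z : ℝ) : AddCircle π)
      = ((Complex.arg (c : ℂ) : ℝ) : AddCircle π) + ((Complex.arg z : ℝ) : AddCircle π)
  exact AddCircle.coe_add (p := π) _ _

def Sc : Set ℂ := Metric.closedBall 0 1

lemma measurableSet_Sc : MeasurableSet Sc := Metric.isClosed_closedBall.measurableSet

lemma eC_preimage_Sc : eC ⁻¹' Sc = unitDisc := by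
  ext p
  simp only [eC, Sc, Set.mem_preimage, Metric.mem_closedBall, Complex.dist_eq, sub_zero,
    unitDisc, Set.mem_setOf_eq]
  rw [← pow_le_one_iff_of_nonneg (norm_nonneg _) two_ne_zero, Complex.sq_norm,
    Complex.normSq_add_mul_I]

lemma rot_preimage_Sc (c : Circle) : (fun z => (c : ℂ) * z) ⁻¹' Sc = Sc := by
  ext z
  simp only [Sc, Set.mem_preimage, Metric.mem_closedBall, Complex.dist_eq, sub_zero, norm_mul,
    Circle.norm_coe, one_mul]

lemma measurable_rot (c : Circle) : Measurable (fun z : ℂ => (c : ℂ) * z) := by fun_prop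

lemma map_rot_volume (c : Circle) :
    Measure.map (fun z => (c : ℂ) * z) (volume : Measure ℂ) = volume := by
  have h : (fun z : ℂ => (c : ℂ) * z) = ⇑(rotation c) := by
    funext z; rw [rotation_apply]
  rw [h]
  exact (rotation c).measurePreserving.map_eq

lemma volume_unitDisc_ne_zero : volume unitDisc ≠ 0 := by
  have hsub : (Set.Icc (-2⁻¹ : ℝ) 2⁻¹ ×ˢ Set.Icc (-2⁻¹ : ℝ) 2⁻¹) ⊆ unitDisc := by
    rintro ⟨x, y⟩ ⟨⟨hx1, hx2⟩, ⟨hy1, hy2⟩⟩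
    simp only [unitDisc, Set.mem_setOf_eq]
    nlinarith
  intro h0
  have h1 : volume (Set.Icc (-2⁻¹ : ℝ) 2⁻¹ ×ˢ Set.Icc (-2⁻¹ : ℝ) 2⁻¹) = 0 :=
    measure_mono_null hsub h0
  rw [Measure.volume_eq_prod, Measure.prod_prod, Real.volume_Icc] at h1
  norm_num at h1

lemma volume_unitDisc_ne_top : volume unitDisc ≠ ⊤ := by
  have hsub : unitDisc ⊆ (Set.Icc (-1 : ℝ) 1 ×ˢ Set.Icc (-1 : ℝ) 1) := by
    rintro ⟨x, y⟩ h
    simp only [unitDisc, Set.mem_setOf_eq] at h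
    constructor <;> constructor <;> nlinarith
  refine ne_top_of_le_ne_top ?_ (measure_mono hsub)
  rw [Measure.volume_eq_prod, Measure.prod_prod, Real.volume_Icc]
  norm_num

end AngleUniformAux

open AngleUniformAux in
/-- If `A` and `B` are independent uniform points in the unit disc and `Θ₁ ∈ [0, π)`
is the angle that the line through `A` and `B` makes with the x-axis (a.s.
characterized by `(B - A)` being parallel to `(cos Θ₁, sin Θ₁)`), then `Θ₁` is
uniform on `[0, π)`. -/
theorem angle_uniform
    {Ω : Type*} [MeasurableSpace Ω] (P : Measure Ω) [IsProbabilityMeasure P]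
    (A B : Ω → ℝ × ℝ) (Θ₁ : Ω → ℝ)
    (hA : Measure.map A P = (volume unitDisc)⁻¹ • volume.restrict unitDisc)
    (hB : Measure.map B P = (volume unitDisc)⁻¹ • volume.restrict unitDisc)
    (hAB : ProbabilityTheory.IndepFun A B P)
    (hΘmeas : Measurable Θ₁)
    (hΘ : ∀ᵐ ω ∂P, A ω ≠ B ω ∧ Θ₁ ω ∈ Set.Ico 0 π ∧
      Real.sin (Θ₁ ω) * ((B ω).1 - (A ω).1)
        = Real.cos (Θ₁ ω) * ((B ω).2 - (A ω).2)) :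
    Measure.map Θ₁ P = (ENNReal.ofReal π)⁻¹ • volume.restrict (Set.Ico (0 : ℝ) π) := by
  classical
  set μ : Measure (ℝ × ℝ) := (volume unitDisc)⁻¹ • volume.restrict unitDisc with hμdef
  have hv0 := volume_unitDisc_ne_zero
  have hvt := volume_unitDisc_ne_top
  haveI hμprob : IsProbabilityMeasure μ := ⟨by
    rw [hμdef, Measure.smul_apply, Measure.restrict_apply_univ, smul_eq_mul,
      ENNReal.inv_mul_cancel hv0 hvt]⟩
  -- A and B are a.e. measurable
  have hAmeas : AEMeasurable A P := by
    by_contra h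
    rw [Measure.map_of_not_aemeasurable h] at hA
    have h1 := hμprob.measure_univ
    rw [← hA] at h1
    simp at h1
  have hBmeas : AEMeasurable B P := by
    by_contra h
    rw [Measure.map_of_not_aemeasurable h] at hB
    have h1 := hμprob.measure_univ
    rw [← hB] at h1
    simp at h1
  -- the uniform measure on the disc, seen in ℂ
  set μC : Measure ℂ := Measure.map eC μ with hμCdef
  haveI hμCprob : IsProbabilityMeasure μC :=
    Measure.isProbabilityMeasure_map measurable_eC.aemeasurable
  have hμC : μC = (volume unitDisc)⁻¹ • volume.restrict Sc := by
    rw [hμCdef, hμdef, Measure.map_smul]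
    congr 1
    rw [← eC_preimage_Sc, ← Measure.restrict_map measurable_eC measurableSet_Sc,
      volume_preserving_eC.map_eq]
  -- rotation invariance of μC
  have hrotC : ∀ c : Circle, Measure.map (fun z => (c : ℂ) * z) μC = μC := by
    intro c
    rw [hμC, Measure.map_smul]
    congr 1
    conv_lhs => rw [← rot_preimage_Sc c]
    rw [← Measure.restrict_map (measurable_rot c) measurableSet_Sc,
      map_rot_volume c]
  -- joint law
  have hpair : Measure.map (fun ω => (A ω, B ω)) P = μ.prod μ := by
    rw [(ProbabilityTheory.indepFun_iff_map_prod_eq_prod_map_map hAmeas hBmeas).mp hAB, hA, hB]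
  -- the difference vector, as a complex number
  have hsubmeas : Measurable (fun p : ℂ × ℂ => p.2 - p.1) :=
    measurable_snd.sub measurable_fst
  set ν : Measure ℂ := Measure.map (fun p : ℂ × ℂ => p.2 - p.1) (μC.prod μC) with hνdef
  have hΦmeas : AEMeasurable (fun ω => eC (B ω) - eC (A ω)) P :=
    (measurable_eC.comp_aemeasurable hBmeas).sub (measurable_eC.comp_aemeasurable hAmeas)
  have hν : Measure.map (fun ω => eC (B ω) - eC (A ω)) P = ν := by
    have h1 : Measure.map (fun ω => eC (B ω) - eC (A ω)) P
        = Measure.map ((fun p : ℂ × ℂ => p.2 - p.1) ∘ Prod.map eC eC)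
            (Measure.map (fun ω => (A ω, B ω)) P) :=
      (AEMeasurable.map_map_of_aemeasurable
        ((hsubmeas.comp (measurable_eC.prodMap measurable_eC)).aemeasurable)
        (hAmeas.prodMk hBmeas)).symm
    rw [h1, hpair, ← Measure.map_map hsubmeas (measurable_eC.prodMap measurable_eC),
      ← Measure.map_prod_map μ μ measurable_eC measurable_eC, hνdef]
  haveI hνprob : IsProbabilityMeasure ν :=
    Measure.isProbabilityMeasure_map hsubmeas.aemeasurable
  -- ν gives no mass to 0
  have hν0 : ν {0} = 0 := by
    rw [← hν, Measure.map_apply_of_aemeasurable hΦmeas (measurableSet_singleton 0)]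
    have hae : ∀ᵐ ω ∂P, eC (B ω) - eC (A ω) ≠ 0 := by
      filter_upwards [hΘ] with ω hω hc
      rw [sub_eq_zero] at hc
      exact hω.1 (eC_injective hc).symm
    have h2 := ae_iff.mp hae
    rw [show (fun ω => eC (B ω) - eC (A ω)) ⁻¹' {0} = {ω | ¬ eC (B ω) - eC (A ω) ≠ 0} by
      ext ω; simp]
    exact h2
  have hν_ne : ∀ᵐ z ∂ν, z ≠ 0 := by
    rw [ae_iff]
    convert hν0 using 2
    ext z; simp
  -- rotation invariance of ν
  have hrotν : ∀ c : Circle, Measure.map (fun z => (c : ℂ) * z) ν = ν := by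
    intro c
    have h1 : Measure.map (fun z => (c : ℂ) * z) ν
        = Measure.map ((fun z => (c : ℂ) * z) ∘ (fun p : ℂ × ℂ => p.2 - p.1)) (μC.prod μC) := by
      rw [hνdef, Measure.map_map (measurable_rot c) hsubmeas]
    have h2 : ((fun z => (c : ℂ) * z) ∘ (fun p : ℂ × ℂ => p.2 - p.1))
        = (fun p : ℂ × ℂ => p.2 - p.1) ∘ Prod.map (fun z => (c : ℂ) * z) (fun z => (c : ℂ) * z) := by
      funext p
      simp [Function.comp, mul_sub]
    rw [h1, h2, ← Measure.map_map hsubmeas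
      ((measurable_rot c).prodMap (measurable_rot c)),
      ← Measure.map_prod_map _ _ (measurable_rot c) (measurable_rot c),
      hrotC c, hνdef]
  -- the angle measure on AddCircle π
  haveI hρprob : IsProbabilityMeasure (Measure.map g ν) :=
    Measure.isProbabilityMeasure_map measurable_g.aemeasurable
  haveI hρinv : (Measure.map g ν).IsAddLeftInvariant := by
    constructor
    intro a
    obtain ⟨α, rfl⟩ := QuotientAddGroup.mk_surjective a
    set c : Circle := Real.Angle.toCircle (α : Real.Angle) with hcdef
    have hstep1 : Measure.map (fun x => (α : AddCircle π) + x) (Measure.map g ν)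
        = Measure.map ((fun x => (α : AddCircle π) + x) ∘ g) ν :=
      Measure.map_map (measurable_const_add _) measurable_g
    have hstep2 : Measure.map ((fun x => (α : AddCircle π) + x) ∘ g) ν
        = Measure.map (g ∘ (fun z => (c : ℂ) * z)) ν := by
      apply Measure.map_congr
      filter_upwards [hν_ne] with z hz
      show (α : AddCircle π) + g z = g ((c : ℂ) * z)
      rw [g_rot α z hz]
    have hstep3 : Measure.map (g ∘ (fun z => (c : ℂ) * z)) ν = Measure.map g ν := by
      rw [← Measure.map_map measurable_g (measurable_rot c), hrotν c]
    exact hstep1.trans (hstep2.trans hstep3)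
  -- by uniqueness of Haar measure, map g ν is the normalized measure on AddCircle π
  have hρeq := Measure.isAddInvariant_eq_smul_of_compactSpace (Measure.map g ν)
    (volume : Measure (AddCircle π))
  have hρvol : Measure.map g ν = (ENNReal.ofReal π)⁻¹ • (volume : Measure (AddCircle π)) := by
    have h1 := congrArg (fun m : Measure (AddCircle π) => m Set.univ) hρeq
    simp only [measure_univ, Measure.smul_apply, AddCircle.measure_univ, smul_eq_mul] at h1
    have h2 : ((Measure.addHaarScalarFactor (Measure.map g ν)
        (volume : Measure (AddCircle π)) : NNReal) : ENNReal) = (ENNReal.ofReal π)⁻¹ :=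
      ENNReal.eq_inv_of_mul_eq_one_left h1.symm
    rw [hρeq]
    ext s hs
    simp only [Measure.smul_apply, smul_eq_mul, ← h2]
    rfl
  -- identify the law of Θ₁ with map L (map g ν)
  have hae : Θ₁ =ᵐ[P] (fun ω => L (g (eC (B ω) - eC (A ω)))) := by
    filter_upwards [hΘ] with ω hω
    obtain ⟨hne, hmem, hcross⟩ := hω
    have hre : (eC (B ω) - eC (A ω)).re = (B ω).1 - (A ω).1 := by simp
    have him : (eC (B ω) - eC (A ω)).im = (B ω).2 - (A ω).2 := by simp
    have hv : (B ω).1 - (A ω).1 ≠ 0 ∨ (B ω).2 - (A ω).2 ≠ 0 := by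
      by_contra hc
      push_neg at hc
      apply hne
      have h1 : (A ω).1 = (B ω).1 := by linarith [hc.1]
      have h2 : (A ω).2 = (B ω).2 := by linarith [hc.2]
      exact Prod.ext h1 h2
    have hcross' := cross_eq (eC (B ω) - eC (A ω))
    rw [hre, him] at hcross'
    exact angle_unique hv hmem (mem_L _) hcross (by linarith)
  have hmapΘ : Measure.map Θ₁ P = Measure.map L (Measure.map g ν) := by
    rw [Measure.map_congr hae]
    have h1 : Measure.map (fun ω => L (g (eC (B ω) - eC (A ω)))) P
        = Measure.map (L ∘ g) (Measure.map (fun ω => eC (B ω) - eC (A ω)) P) :=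
      (AEMeasurable.map_map_of_aemeasurable ((measurable_L.comp measurable_g).aemeasurable)
        hΦmeas).symm
    rw [h1, hν, ← Measure.map_map measurable_L measurable_g]
  -- compute map L volume
  have hLvol : Measure.map L (volume : Measure (AddCircle π))
      = volume.restrict (Set.Ico (0 : ℝ) π) := by
    have h0 : (volume : Measure (AddCircle π))
        = Measure.map ((↑) : ℝ → AddCircle π) (volume.restrict (Set.Ioc 0 (0 + π))) :=
      (AddCircle.measurePreserving_mk π 0).map_eq.symm
    rw [h0, Measure.map_map measurable_L AddCircle.measurable_mk']
    have h1 : ∀ᵐ x : ℝ ∂volume, x ≠ π := by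
      rw [ae_iff]
      have h2 : {x : ℝ | ¬x ≠ π} = {π} := by ext x; simp
      rw [h2]
      exact measure_singleton π
    have hae2 : (L ∘ ((↑) : ℝ → AddCircle π))
        =ᵐ[volume.restrict (Set.Ioc 0 (0 + π))] id := by
      filter_upwards [ae_restrict_of_ae h1, ae_restrict_mem measurableSet_Ioc] with x hx hxm
      show L ((x : ℝ) : AddCircle π) = x
      refine L_mk x ⟨hxm.1.le, lt_of_le_of_ne ?_ hx⟩
      have := hxm.2
      linarith
    rw [Measure.map_congr hae2, Measure.map_id, zero_add,
      MeasureTheory.restrict_Ioc_eq_restrict_Icc, ← MeasureTheory.restrict_Ico_eq_restrict_Icc]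
  rw [hmapΘ, hρvol, Measure.map_smul, hLvol]
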